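/- Let r₁ < ⋯ < r_k be positive integers, S = ⟨r₁,…,r_k⟩, d = gcd(r₁,…,r_k), and let n > r_k² with gcd(n,d) = 1 and dn ∈ S. Set M_n = ⟨n, n+r₁,…,n+r_k⟩. Then Ap(M_n; n) = {i + m_S(i)·n : i ∈ Ap(S; dn)}, where m_S(i) denotes the minimum factorization length of i in S. -/
import Mathlib


open scoped Classical

/-- Membership in the additive submonoid of `ℕ` generated by `r 0, …, r (k-1)`. -/
def memGen {k : ℕ} (r : Fin k → ℕ) (a : ℕ) : Prop :=
  ∃ z : Fin k → ℕ, a = ∑ i, z i * r i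

/-- The Apéry set `Ap(S; x) = {m ∈ S : m - x ∉ S}` (subtraction in `ℤ`,
encoded by the guard `x ≤ m`). -/
def aperySet {k : ℕ} (r : Fin k → ℕ) (x : ℕ) : Set ℕ :=
  {m | memGen r m ∧ ¬(x ≤ m ∧ memGen r (m - x))}

/-- The set of factorization lengths of `a` in the monoid generated by `r`. -/
def lenSet {k : ℕ} (r : Fin k → ℕ) (a : ℕ) : Set ℕ :=
  {ℓ | ∃ z : Fin k → ℕ, a = ∑ i, z i * r i ∧ ℓ = ∑ i, z i}

/-- The minimum factorization length of `a` in the monoid generated by `r`. -/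
noncomputable def minLen {k : ℕ} (r : Fin k → ℕ) (a : ℕ) : ℕ :=
  sInf (lenSet r a)

/-- The generators `n, n + r 0, …, n + r (k-1)` of the shifted monoid `M_n`. -/
def shiftGen {k : ℕ} (n : ℕ) (r : Fin k → ℕ) : Fin (k + 1) → ℕ :=
  Fin.cons n (fun i => n + r i)

/-- The genus: the number of gaps of the monoid generated by `r`. -/
noncomputable def genus {k : ℕ} (r : Fin k → ℕ) : ℕ :=
  Set.ncard {m : ℕ | ¬ memGen r m}

/-- The Frobenius number: the largest gap of the monoid generated by `r`. -/
noncomputable def frob {k : ℕ} (r : Fin k → ℕ) : ℕ :=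
  sSup {m : ℕ | ¬ memGen r m}

/-- The set of pseudo-Frobenius numbers of the monoid generated by `r`. -/
def pseudoFrob {k : ℕ} (r : Fin k → ℕ) : Set ℕ :=
  {m | ¬ memGen r m ∧ ∀ x : ℕ, memGen r x → 0 < x → memGen r (m + x)}

noncomputable def takeSeq {k : ℕ} (w : Fin k → ℕ) : ℕ → Fin k → ℕ
  | 0 => fun _ => 0
  | m + 1 =>
    if h : ∃ j, takeSeq w m j < w j then
      fun x => takeSeq w m x + if x = Classical.choose h then 1 else 0
    else takeSeq w m

lemma takeSeq_le {k : ℕ} (w : Fin k → ℕ) : ∀ m j, takeSeq w m j ≤ w j := by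
  intro m
  induction m with
  | zero => intro j; simp [takeSeq]
  | succ m ih =>
    intro j
    rw [takeSeq]
    split_ifs with h
    · have hs := Classical.choose_spec h
      by_cases hj : j = Classical.choose h
      · subst hj; simpa using hs
      · simpa [hj] using ih j
    · exact ih j

lemma takeSeq_mono_succ {k : ℕ} (w : Fin k → ℕ) (m : ℕ) (j : Fin k) :
    takeSeq w m j ≤ takeSeq w (m + 1) j := by
  rw [takeSeq]
  split_ifs with h
  · simp
  · exact le_rfl

lemma takeSeq_mono {k : ℕ} (w : Fin k → ℕ) {a b : ℕ} (hab : a ≤ b) (j : Fin k) :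
    takeSeq w a j ≤ takeSeq w b j := by
  induction b, hab using Nat.le_induction with
  | base => exact le_rfl
  | succ b hb ih => exact le_trans ih (takeSeq_mono_succ w b j)

lemma takeSeq_sum {k : ℕ} (w : Fin k → ℕ) (m : ℕ) :
    ∑ j, takeSeq w m j = min m (∑ j, w j) := by
  induction m with
  | zero => simp [takeSeq]
  | succ m ih =>
    rw [takeSeq]
    split_ifs with h
    · have hs := Classical.choose_spec h
      have hlt : ∑ j, takeSeq w m j < ∑ j, w j :=
        Finset.sum_lt_sum (fun j _ => takeSeq_le w m j)
          ⟨Classical.choose h, Finset.mem_univ _, hs⟩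
      have hsum : ∑ x, (takeSeq w m x + if x = Classical.choose h then 1 else 0)
          = (∑ x, takeSeq w m x) + 1 := by
        rw [Finset.sum_add_distrib, Finset.sum_ite_eq' Finset.univ (Classical.choose h)
          (fun _ => 1)]
        simp
      rw [hsum, ih]; omega
    · push_neg at h
      have : ∀ j, takeSeq w m j = w j := fun j => le_antisymm (takeSeq_le w m j) (h j)
      have heq : ∑ j, takeSeq w m j = ∑ j, w j := Finset.sum_congr rfl fun j _ => this j
      rw [heq] at ih ⊢
      omega

lemma exists_chunk {k : ℕ} (w rr : Fin k → ℕ) (R : ℕ) (hR : 0 < R)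
    (hs : R ≤ ∑ j, w j) :
    ∃ y : Fin k → ℕ, (∀ j, y j ≤ w j) ∧ 0 < ∑ j, y j ∧ R ∣ ∑ j, y j * rr j := by
  have main : ∀ a b : ℕ, a < b → b ≤ R →
      (∑ x, takeSeq w a x * rr x) % R = (∑ x, takeSeq w b x * rr x) % R →
      ∃ y : Fin k → ℕ, (∀ j, y j ≤ w j) ∧ 0 < ∑ j, y j ∧ R ∣ ∑ j, y j * rr j := by
    intro a b hab hbR hmod
    have hmono : ∀ x, takeSeq w a x ≤ takeSeq w b x := takeSeq_mono w (le_of_lt hab)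
    refine ⟨fun x => takeSeq w b x - takeSeq w a x,
      fun x => le_trans (Nat.sub_le _ _) (takeSeq_le w b x), ?_, ?_⟩
    · show 0 < ∑ x, (takeSeq w b x - takeSeq w a x)
      have h1 : ∑ x, (takeSeq w b x - takeSeq w a x) + ∑ x, takeSeq w a x
          = ∑ x, takeSeq w b x := by
        rw [← Finset.sum_add_distrib]
        exact Finset.sum_congr rfl fun x _ => Nat.sub_add_cancel (hmono x)
      have h2 := takeSeq_sum w a
      have h3 := takeSeq_sum w b
      omega
    · show R ∣ ∑ x, (takeSeq w b x - takeSeq w a x) * rr x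
      have h4 : ∑ x, (takeSeq w b x - takeSeq w a x) * rr x + ∑ x, takeSeq w a x * rr x
          = ∑ x, takeSeq w b x * rr x := by
        rw [← Finset.sum_add_distrib]
        refine Finset.sum_congr rfl fun x _ => ?_
        rw [← add_mul, Nat.sub_add_cancel (hmono x)]
      have hle : (∑ x, takeSeq w a x * rr x) ≤ ∑ x, takeSeq w b x * rr x := by omega
      have hdvd : R ∣ (∑ x, takeSeq w b x * rr x) - (∑ x, takeSeq w a x * rr x) :=
        (Nat.modEq_iff_dvd' hle).mp hmod
      have : (∑ x, (takeSeq w b x - takeSeq w a x) * rr x)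
          = (∑ x, takeSeq w b x * rr x) - (∑ x, takeSeq w a x * rr x) := by omega
      rw [this]; exact hdvd
  have hmap : ∀ m ∈ Finset.range (R + 1),
      (∑ x, takeSeq w m x * rr x) % R ∈ Finset.range R :=
    fun m _ => Finset.mem_range.mpr (Nat.mod_lt _ hR)
  obtain ⟨a, ha, b, hb, hab, heq⟩ :=
    Finset.exists_ne_map_eq_of_card_lt_of_maps_to (by simp) hmap
  rcases lt_or_gt_of_ne hab with h | h
  · exact main a b h (by simpa using Nat.lt_succ_iff.mp (Finset.mem_range.mp hb)) heq
  · exact main b a h (by simpa using Nat.lt_succ_iff.mp (Finset.mem_range.mp ha)) heq.symm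

lemma memGen_add {k : ℕ} {r : Fin k → ℕ} {a b : ℕ} (ha : memGen r a) (hb : memGen r b) :
    memGen r (a + b) := by
  obtain ⟨x, hx⟩ := ha; obtain ⟨y, hy⟩ := hb
  exact ⟨x + y, by simp [hx, hy, add_mul, Finset.sum_add_distrib]⟩

lemma memGen_zero {k : ℕ} {r : Fin k → ℕ} : memGen r 0 := ⟨fun _ => 0, by simp⟩

lemma memGen_nsmul {k : ℕ} {r : Fin k → ℕ} {a : ℕ} (t : ℕ) (ha : memGen r a) :
    memGen r (t * a) := by
  induction t with
  | zero => simpa using memGen_zero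
  | succ t ih =>
    have := memGen_add ih ha
    simpa [Nat.succ_mul] using this

lemma gcd_dvd_memGen {k : ℕ} {r : Fin k → ℕ} {a : ℕ} (h : memGen r a) :
    Finset.univ.gcd r ∣ a := by
  obtain ⟨z, hz⟩ := h
  rw [hz]
  exact Finset.dvd_sum fun j _ => Dvd.dvd.mul_left (Finset.gcd_dvd (Finset.mem_univ j)) _

lemma minLen_mem {k : ℕ} {r : Fin k → ℕ} {a : ℕ} (h : memGen r a) :
    ∃ z : Fin k → ℕ, a = ∑ j, z j * r j ∧ (∑ j, z j) = minLen r a := by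
  obtain ⟨z0, hz0⟩ := h
  have : minLen r a ∈ lenSet r a := Nat.sInf_mem ⟨∑ j, z0 j, z0, hz0, rfl⟩
  obtain ⟨z, h1, h2⟩ := this
  exact ⟨z, h1, h2.symm⟩

lemma minLen_le {k : ℕ} {r : Fin k → ℕ} {a : ℕ} (z : Fin k → ℕ) (h : a = ∑ j, z j * r j) :
    minLen r a ≤ ∑ j, z j := Nat.sInf_le ⟨z, h, rfl⟩

lemma le_mul_minLen {k : ℕ} {r : Fin (k+1) → ℕ} (hmono : Monotone r) {a : ℕ}
    (h : memGen r a) : a ≤ r (Fin.last k) * minLen r a := by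
  obtain ⟨z, hz, hlen⟩ := minLen_mem h
  calc a = ∑ j, z j * r j := hz
    _ ≤ ∑ j, z j * r (Fin.last k) :=
        Finset.sum_le_sum fun j _ => Nat.mul_le_mul_left _ (hmono (Fin.le_last j))
    _ = (∑ j, z j) * r (Fin.last k) := by rw [← Finset.sum_mul]
    _ = r (Fin.last k) * minLen r a := by rw [hlen, Nat.mul_comm]

lemma exists_small_fact {k : ℕ} (r : Fin (k+1) → ℕ) (hRpos : 0 < r (Fin.last k)) :
    ∀ (s : ℕ) (z : Fin (k+1) → ℕ), (∑ j : Fin k, z j.castSucc) = s →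
      ∃ z' : Fin (k+1) → ℕ, (∑ j, z' j * r j) = (∑ j, z j * r j) ∧
        (∑ j : Fin k, z' j.castSucc) < r (Fin.last k) := by
  intro s
  induction s using Nat.strong_induction_on with
  | _ s IH =>
    intro z hz
    by_cases hlt : (∑ j : Fin k, z j.castSucc) < r (Fin.last k)
    · exact ⟨z, rfl, hlt⟩
    · push_neg at hlt
      obtain ⟨y, hy_le, hy_pos, hy_dvd⟩ :=
        exists_chunk (fun j => z j.castSucc) (fun j => r j.castSucc) (r (Fin.last k))
          hRpos hlt
      have hy_dvd' : r (Fin.last k) ∣ ∑ j, y j * r j.castSucc := hy_dvd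
      set c := (∑ j, y j * r j.castSucc) / r (Fin.last k) with hcdef
      have hc : c * r (Fin.last k) = ∑ j, y j * r j.castSucc := Nat.div_mul_cancel hy_dvd'
      set z' : Fin (k+1) → ℕ :=
        Fin.snoc (fun j => z j.castSucc - y j) (z (Fin.last k) + c) with hz'def
      have hz'c : ∀ j : Fin k, z' j.castSucc = z j.castSucc - y j := by
        intro j; simp [hz'def]
      have hz'l : z' (Fin.last k) = z (Fin.last k) + c := by simp [hz'def]
      have hval : (∑ j, z' j * r j) = (∑ j, z j * r j) := by
        simp only [Fin.sum_univ_castSucc (f := fun j => z' j * r j),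
            Fin.sum_univ_castSucc (f := fun j => z j * r j)]
        have h1 : (∑ j : Fin k, z' j.castSucc * r j.castSucc) + (∑ j : Fin k, y j * r j.castSucc)
            = ∑ j : Fin k, z j.castSucc * r j.castSucc := by
          rw [← Finset.sum_add_distrib]
          refine Finset.sum_congr rfl fun j _ => ?_
          rw [hz'c j, ← add_mul, Nat.sub_add_cancel (hy_le j)]
        rw [hz'l, add_mul]
        omega
      have hsmall : (∑ j : Fin k, z' j.castSucc) = s - (∑ j, y j) := by
        have h2 : (∑ j : Fin k, z' j.castSucc) + (∑ j, y j) = ∑ j : Fin k, z j.castSucc := by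
          rw [← Finset.sum_add_distrib]
          refine Finset.sum_congr rfl fun j _ => ?_
          rw [hz'c j, Nat.sub_add_cancel (hy_le j)]
        omega
      have hspos : 0 < s := by omega
      obtain ⟨z'', h1, h2⟩ := IH (s - ∑ j, y j) (by omega) z' hsmall
      exact ⟨z'', h1.trans hval, h2⟩

lemma minLen_upper {k : ℕ} {r : Fin (k+1) → ℕ} (hRpos : 0 < r (Fin.last k)) {a : ℕ}
    (h : memGen r a) :
    r (Fin.last k) * minLen r a ≤ a + r (Fin.last k) * r (Fin.last k) := by
  obtain ⟨z0, hz0⟩ := h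
  obtain ⟨z, hval, hsmall⟩ := exists_small_fact r hRpos _ z0 rfl
  set R := r (Fin.last k) with hRdef
  have ha' : a = ∑ j, z j * r j := hz0.trans hval.symm
  have hlen : minLen r a ≤ (∑ j : Fin k, z j.castSucc) + z (Fin.last k) := by
    have h1 := minLen_le z ha'
    have h2 : (∑ j, z j) = (∑ j : Fin k, z j.castSucc) + z (Fin.last k) :=
      Fin.sum_univ_castSucc (f := fun j => z j)
    omega
  have hlast : z (Fin.last k) * R ≤ a := by
    have h2 : a = (∑ j : Fin k, z j.castSucc * r j.castSucc) + z (Fin.last k) * R := by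
      rw [ha']; exact Fin.sum_univ_castSucc (f := fun j => z j * r j)
    omega
  have hmul : R * minLen r a ≤ R * ((∑ j : Fin k, z j.castSucc) + z (Fin.last k)) :=
    Nat.mul_le_mul_left _ hlen
  have hexp : R * ((∑ j : Fin k, z j.castSucc) + z (Fin.last k))
      = R * (∑ j : Fin k, z j.castSucc) + z (Fin.last k) * R := by ring
  have hsm : R * (∑ j : Fin k, z j.castSucc) ≤ R * R := Nat.mul_le_mul_left _ (by omega)
  omega

lemma mem_shiftGen_iff {k : ℕ} {n : ℕ} {r : Fin (k+1) → ℕ} {m : ℕ} :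
    memGen (shiftGen n r) m ↔ ∃ L i, memGen r i ∧ minLen r i ≤ L ∧ m = L * n + i := by
  constructor
  · rintro ⟨z, hz⟩
    refine ⟨z 0 + ∑ j : Fin (k+1), z j.succ, ∑ j : Fin (k+1), z j.succ * r j,
      ⟨fun j => z j.succ, rfl⟩,
      le_trans (minLen_le (fun j => z j.succ) rfl) (Nat.le_add_left _ _), ?_⟩
    rw [hz]
    rw [Fin.sum_univ_succ (f := fun j => z j * shiftGen n r j)]
    simp only [shiftGen, Fin.cons_zero, Fin.cons_succ, mul_add]
    rw [Finset.sum_add_distrib, add_mul, ← Finset.sum_mul]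
    ring
  · rintro ⟨L, i, hi, hle, rfl⟩
    obtain ⟨z, hz, hlen⟩ := minLen_mem hi
    set z' : Fin (k+1+1) → ℕ := Fin.cons (L - minLen r i) z with hz'
    refine ⟨z', ?_⟩
    rw [Fin.sum_univ_succ (f := fun j => z' j * shiftGen n r j)]
    have h0 : z' 0 * shiftGen n r 0 = (L - minLen r i) * n := by
      simp [hz', shiftGen]
    have hsucc : ∀ j : Fin (k+1), z' j.succ * shiftGen n r j.succ = z j * (n + r j) := by
      intro j; simp [hz', shiftGen]
    rw [h0, Finset.sum_congr rfl (fun j hj => hsucc j)]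
    have h1 : ∑ j : Fin (k+1), z j * (n + r j)
        = (∑ j : Fin (k+1), z j) * n + ∑ j : Fin (k+1), z j * r j := by
      simp only [mul_add]
      rw [Finset.sum_add_distrib, Finset.sum_mul]
    rw [h1, hlen, ← hz]
    have h2 : (L - minLen r i) * n + minLen r i * n = L * n := by
      rw [← add_mul, Nat.sub_add_cancel hle]
    omega


/-- For `r₁ < ⋯ < r_k` positive, `S = ⟨r₁,…,r_k⟩`, `d = gcd(r₁,…,r_k)`,
`n > r_k²`, `gcd(n,d) = 1`, `dn ∈ S`, and `M_n = ⟨n, n+r₁,…,n+r_k⟩`: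
`Ap(M_n; n) = {i + m_S(i)·n : i ∈ Ap(S; dn)}`. -/
theorem apery_shifted {k : ℕ} (r : Fin (k + 1) → ℕ)
    (hmono : StrictMono r) (hpos : 0 < r 0)
    (d : ℕ) (hd : d = Finset.univ.gcd r)
    (n : ℕ) (hn : n > (r (Fin.last k)) ^ 2)
    (hgcd : Nat.gcd n d = 1) (hdn : memGen r (d * n)) :
    aperySet (shiftGen n r) n = (fun i => i + minLen r i * n) '' aperySet r (d * n) := by
  have hmonoM : Monotone r := hmono.monotone
  have hRpos : 0 < r (Fin.last k) := lt_of_lt_of_le hpos (hmonoM (Fin.zero_le _))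
  have hnR : r (Fin.last k) * r (Fin.last k) < n := by
    have h := hn; rw [pow_two] at h; exact h
  have hnpos : 0 < n := by
    have : 0 < r (Fin.last k) * r (Fin.last k) := Nat.mul_pos hRpos hRpos
    omega
  have hdpos : 0 < d := by
    have hdvd : d ∣ r 0 := by rw [hd]; exact Finset.gcd_dvd (Finset.mem_univ 0)
    rcases Nat.eq_zero_or_pos d with h0 | h
    · subst h0; rw [Nat.zero_dvd] at hdvd; omega
    · exact h
  have hcop : Nat.Coprime d n := Nat.Coprime.symm hgcd
  have hdd : ∀ {x : ℕ}, memGen r x → d ∣ x := by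
    intro x hx; rw [hd]; exact gcd_dvd_memGen hx
  have hkey : ∀ {i q : ℕ}, memGen r i → memGen r (i + q) → n ≤ q →
      minLen r i < minLen r (i + q) := by
    intro i q hi hiq hq
    have h1 := minLen_upper hRpos hi
    have h2 := le_mul_minLen hmonoM hiq
    have h3 : r (Fin.last k) * minLen r i < r (Fin.last k) * minLen r (i + q) := by omega
    exact lt_of_mul_lt_mul_left h3 (Nat.zero_le _)
  ext m
  simp only [aperySet, Set.mem_setOf_eq, Set.mem_image]
  constructor
  · rintro ⟨hm1, hm2⟩
    rw [mem_shiftGen_iff] at hm1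
    obtain ⟨L0, w0, hw0, hlen0, hm0⟩ := hm1
    set T : Set ℕ := {ℓ | ℓ * n ≤ m ∧ memGen r (m - ℓ * n)} with hT
    have hT0 : L0 ∈ T := ⟨by omega, by
      have h : m - L0 * n = w0 := by omega
      rw [h]; exact hw0⟩
    have hTbdd : BddAbove T := by
      refine ⟨m, fun ℓ hℓ => ?_⟩
      have h1 : ℓ * 1 ≤ ℓ * n := Nat.mul_le_mul_left _ hnpos
      have h2 := hℓ.1
      omega
    have hls : sSup T ∈ T := Nat.sSup_mem ⟨L0, hT0⟩ hTbdd
    set ℓs := sSup T with hlsdef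
    have hmax : ∀ x ∈ T, x ≤ ℓs := fun x hx => le_csSup hTbdd hx
    have hjmem : memGen r (m - ℓs * n) := hls.2
    have hln : ℓs * n ≤ m := hls.1
    set j := m - ℓs * n with hjdef
    have hjm : m = ℓs * n + j := by omega
    have hjAp : ¬(d * n ≤ j ∧ memGen r (j - d * n)) := by
      rintro ⟨h1, h2⟩
      have e1 : (ℓs + d) * n = ℓs * n + d * n := by ring
      have hmem : (ℓs + d) ∈ T := ⟨by omega, by
        have h3 : m - (ℓs + d) * n = j - d * n := by omega
        rw [h3]; exact h2⟩
      have := hmax _ hmem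
      omega
    have hle : minLen r j ≤ ℓs := by
      have hL0 : L0 ≤ ℓs := hmax _ hT0
      set s := ℓs - L0 with hsdef
      have e1 : ℓs * n = L0 * n + s * n := by
        have h : ℓs = L0 + s := by omega
        rw [h, add_mul]
      have hw0j : w0 = j + s * n := by omega
      rcases Nat.eq_zero_or_pos s with h0 | hspos
      · have hjw : w0 = j := by
          have h : s * n = 0 := by rw [h0]; ring
          omega
        rw [← hjw]; omega
      · have h2 : minLen r j < minLen r w0 := by
          rw [hw0j] at hw0 ⊢
          refine hkey hjmem hw0 ?_
          have h : 1 * n ≤ s * n := Nat.mul_le_mul_right _ hspos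
          omega
        omega
    have hge : ℓs ≤ minLen r j := by
      by_contra hcon
      push_neg at hcon
      have hls1 : 1 ≤ ℓs := by omega
      apply hm2
      have hnm : n ≤ m := by
        have h : 1 * n ≤ ℓs * n := Nat.mul_le_mul_right _ hls1
        omega
      refine ⟨hnm, ?_⟩
      rw [mem_shiftGen_iff]
      refine ⟨ℓs - 1, j, hjmem, by omega, ?_⟩
      have e1 : ℓs * n = (ℓs - 1) * n + n := by
        have h : ℓs = (ℓs - 1) + 1 := by omega
        nth_rewrite 1 [h]
        rw [add_mul]; ring
      omega
    refine ⟨j, ⟨hjmem, hjAp⟩, ?_⟩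
    have heq : minLen r j = ℓs := le_antisymm hle hge
    show j + minLen r j * n = m
    rw [heq]
    omega
  · rintro ⟨i, ⟨hiS, hiAp⟩, heqm⟩
    have hmeq : m = i + minLen r i * n := heqm.symm
    subst hmeq
    constructor
    · rw [mem_shiftGen_iff]
      exact ⟨minLen r i, i, hiS, le_rfl, by ring⟩
    · rintro ⟨hnm, hmem⟩
      rw [mem_shiftGen_iff] at hmem
      obtain ⟨L, w, hw, hlw, heq⟩ := hmem
      have heq' : i + minLen r i * n = (L + 1) * n + w := by
        have e1 : (L + 1) * n = L * n + n := by ring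
        omega
      rcases le_or_gt (minLen r i) (L + 1) with hcase | hcase
      · set s := L + 1 - minLen r i with hsdef
        have e1 : (L + 1) * n = minLen r i * n + s * n := by
          have h : L + 1 = minLen r i + s := by omega
          rw [h, add_mul]
        have hisw : i = s * n + w := by omega
        have hdw : d ∣ w := hdd hw
        have hdi : d ∣ i := hdd hiS
        have hdsn : d ∣ s * n := by
          have h : s * n = i - w := by omega
          rw [h]; exact Nat.dvd_sub hdi hdw
        have hds : d ∣ s := hcop.dvd_of_dvd_mul_right hdsn
        rcases Nat.eq_zero_or_pos s with h0 | hspos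
        · have hiw : i = w := by
            have h : s * n = 0 := by rw [h0]; ring
            omega
          rw [← hiw] at hlw
          omega
        · obtain ⟨t, ht⟩ := hds
          have htpos : 0 < t := by
            rcases Nat.eq_zero_or_pos t with h0 | h
            · rw [h0, Nat.mul_zero] at ht; omega
            · exact h
          apply hiAp
          have e2 : s * n = t * (d * n) := by rw [ht]; ring
          have e3 : t * (d * n) = (t - 1) * (d * n) + d * n := by
            have h : t = (t - 1) + 1 := by omega
            nth_rewrite 1 [h]
            rw [add_mul]; ring
          constructor
          · omega
          · have h : i - d * n = w + (t - 1) * (d * n) := by omega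
            rw [h]
            exact memGen_add hw (memGen_nsmul _ hdn)
      · set s := minLen r i - (L + 1) with hsdef
        have e1 : minLen r i * n = (L + 1) * n + s * n := by
          have h : minLen r i = (L + 1) + s := by omega
          rw [h, add_mul]
        have hwis : w = i + s * n := by omega
        have hspos : 0 < s := by omega
        have hk : minLen r i < minLen r w := by
          rw [hwis] at hw ⊢
          refine hkey hiS hw ?_
          have h : 1 * n ≤ s * n := Nat.mul_le_mul_right _ hspos
          omega
        omega
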